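/- For every integer n ≥ 2, every coefficient of the polynomial g_n ∈ ℤ[q] is an even integer. -/

import Mathlib

open Finset Polynomial

/-- The cycle of `π` starting at `m`: `m, π m, π² m, …` through one full period. -/
noncomputable def cycleList {n : ℕ} (π : Equiv.Perm (Fin n)) (m : Fin n) : List (Fin n) :=
  (List.range (Function.minimalPeriod π m)).map (fun k => (π ^ k) m)

/-- The minima of the cycles of `π`, listed in increasing order. -/
def cycleMins {n : ℕ} (π : Equiv.Perm (Fin n)) : List (Fin n) :=
  (Finset.univ.filter (fun m : Fin n => ∀ k < n, m ≤ (π ^ k) m)).sort (· ≤ ·)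

/-- The flattened permutation of `π`, as a word on the letters `1, …, n`:
erase the parentheses from the standard cycle form of `π`. -/
noncomputable def flattenPerm {n : ℕ} (π : Equiv.Perm (Fin n)) : List ℕ :=
  ((cycleMins π).map (cycleList π)).flatten.map (fun m => (m : ℕ) + 1)

/-- The number of occurrences of the pattern 13-2 in the word `w = w₁w₂⋯wₙ`
(1-based), i.e. the number of pairs `(i,j)` with `2 ≤ i < j ≤ n` and
`w_{i-1} < w_j < w_i`.  Below, `p.1` and `p.2` are the 0-based versions of `i` and `j`. -/
def occ (w : List ℕ) : ℕ :=
  ((Finset.range w.length ×ˢ Finset.range w.length).filter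
    (fun p : ℕ × ℕ => 1 ≤ p.1 ∧ p.1 < p.2 ∧
      w.getD (p.1 - 1) 0 < w.getD p.2 0 ∧ w.getD p.2 0 < w.getD p.1 0)).card

/-- `g_n = Σ_{π ∈ S_n} q^{occ(Flatten(π))} ∈ ℤ[q]`. -/
noncomputable def gPoly (n : ℕ) : Polynomial ℤ :=
  ∑ π : Equiv.Perm (Fin n), X ^ occ (flattenPerm π)

/-- `g_n(a₁⋯a_k)`: the sum of `q^{occ(Flatten(π))}` over the permutations `π` of length `n`
whose flattened permutation starts with the subword `a₁⋯a_k`. -/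
noncomputable def gPrefix (n : ℕ) (w : List ℕ) : Polynomial ℤ :=
  ∑ π ∈ Finset.univ.filter (fun π : Equiv.Perm (Fin n) => w <+: flattenPerm π),
    X ^ occ (flattenPerm π)

/-- `g_{n,r}(a₁⋯a_k)`: the number of permutations `π` of length `n` such that `Flatten(π)`
starts with `a₁⋯a_k` and has exactly `r` occurrences of the pattern 13-2. -/
noncomputable def gCount (n r : ℕ) (w : List ℕ) : ℕ :=
  (Finset.univ.filter (fun π : Equiv.Perm (Fin n) =>
    w <+: flattenPerm π ∧ occ (flattenPerm π) = r)).card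

namespace FlatAux

open Equiv Function

variable {n : ℕ}

/-- The set of cycle minima of `π`. -/
def mins (π : Equiv.Perm (Fin n)) : Finset (Fin n) :=
  Finset.univ.filter (fun m : Fin n => ∀ k < n, m ≤ (π ^ k) m)

lemma cycleMins_eq (π : Equiv.Perm (Fin n)) : cycleMins π = (mins π).sort (· ≤ ·) := rfl

lemma isPeriodic (π : Equiv.Perm (Fin n)) (m : Fin n) :
    IsPeriodicPt (⇑π) (orderOf π) m := by
  show (π ^ orderOf π) m = m
  rw [pow_orderOf_eq_one]; rfl

lemma period_pos (π : Equiv.Perm (Fin n)) (m : Fin n) : 0 < minimalPeriod (⇑π) m :=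
  Function.minimalPeriod_pos_of_mem_periodicPts
    (Function.mk_mem_periodicPts (orderOf_pos π) (isPeriodic π m))

lemma period_isPeriodic (π : Equiv.Perm (Fin n)) (m : Fin n) :
    (π ^ minimalPeriod (⇑π) m) m = m :=
  Function.isPeriodicPt_minimalPeriod (⇑π) m

lemma pow_mod_period (π : Equiv.Perm (Fin n)) (m : Fin n) (k : ℕ) :
    (π ^ (k % minimalPeriod (⇑π) m)) m = (π ^ k) m :=
  Function.iterate_mod_minimalPeriod_eq

lemma period_le (π : Equiv.Perm (Fin n)) (m : Fin n) : minimalPeriod (⇑π) m ≤ n := by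
  have hinj : Set.InjOn (fun k => (π ^ k) m) (Set.Iio (minimalPeriod (⇑π) m)) :=
    Function.iterate_injOn_Iio_minimalPeriod
  have hcard :
      ((Finset.range (minimalPeriod (⇑π) m)).image (fun k => (π ^ k) m)).card
        = minimalPeriod (⇑π) m := by
    rw [Finset.card_image_of_injOn, Finset.card_range]
    intro a ha b hb hab
    exact hinj (by simpa using ha) (by simpa using hb) hab
  calc minimalPeriod (⇑π) m = _ := hcard.symm
    _ ≤ Fintype.card (Fin n) := Finset.card_le_univ _
    _ = n := Fintype.card_fin n

lemma mem_mins_iff {π : Equiv.Perm (Fin n)} {m : Fin n} :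
    m ∈ mins π ↔ ∀ k, m ≤ (π ^ k) m := by
  constructor
  · intro h k
    rw [← pow_mod_period]
    exact (Finset.mem_filter.mp h).2 _ (lt_of_lt_of_le (Nat.mod_lt _ (period_pos π m))
      (period_le π m))
  · intro h
    exact Finset.mem_filter.mpr ⟨Finset.mem_univ _, fun k _ => h k⟩

lemma pow_min_ne {π : Equiv.Perm (Fin n)} {m : Fin n} {k : ℕ} (hk0 : 0 < k)
    (hk : k < minimalPeriod (⇑π) m) : (π ^ k) m ≠ m := by
  intro h
  have : minimalPeriod (⇑π) m ≤ k := Function.IsPeriodicPt.minimalPeriod_le hk0 h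
  omega

/-- `y` is in the forward orbit of `m`. -/
def InOrb (π : Equiv.Perm (Fin n)) (m y : Fin n) : Prop := ∃ k : ℕ, (π ^ k) m = y

lemma inOrb_refl (π : Equiv.Perm (Fin n)) (m : Fin n) : InOrb π m m := ⟨0, rfl⟩

lemma inOrb_pow (π : Equiv.Perm (Fin n)) (m : Fin n) (k : ℕ) : InOrb π m ((π ^ k) m) := ⟨k, rfl⟩

lemma inOrb_trans {π : Equiv.Perm (Fin n)} {a b c : Fin n} (h1 : InOrb π a b)
    (h2 : InOrb π b c) : InOrb π a c := by
  obtain ⟨k, rfl⟩ := h1; obtain ⟨l, rfl⟩ := h2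
  exact ⟨l + k, by rw [pow_add, Equiv.Perm.mul_apply]⟩

lemma inOrb_symm {π : Equiv.Perm (Fin n)} {a b : Fin n} (h : InOrb π a b) : InOrb π b a := by
  obtain ⟨k, rfl⟩ := h
  set p := minimalPeriod (⇑π) a with hp
  obtain ⟨p', hp'⟩ : ∃ p', p = p' + 1 := ⟨p - 1, by have := period_pos π a; omega⟩
  refine ⟨k * p', ?_⟩
  rw [← Equiv.Perm.mul_apply, ← pow_add]
  have hkp : k * p' + k = k * p := by rw [hp']; ring
  rw [hkp]
  have : IsPeriodicPt (⇑π) (p * k) a :=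
    (Function.isPeriodicPt_minimalPeriod (⇑π) a).mul_const k
  have h2 : (π ^ (p * k)) a = a := this
  rw [mul_comm] at h2
  exact h2

lemma pow_fixed {π : Equiv.Perm (Fin n)} {x : Fin n} (h : π x = x) (k : ℕ) :
    (π ^ k) x = x := by
  induction k with
  | zero => rfl
  | succ k ih => rw [pow_succ', Equiv.Perm.mul_apply, ih, h]

/-- If `σ` agrees with `π` on the forward `π`-orbit of `m`, the iterates agree. -/
lemma agree_iterate {σ π : Equiv.Perm (Fin n)} {m : Fin n}
    (h : ∀ k, σ ((π ^ k) m) = π ((π ^ k) m)) : ∀ k, (σ ^ k) m = (π ^ k) m := by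
  intro k
  induction k with
  | zero => rfl
  | succ k ih =>
    rw [pow_succ', Equiv.Perm.mul_apply, ih, h k, ← Equiv.Perm.mul_apply, ← pow_succ']

lemma agree_period {σ π : Equiv.Perm (Fin n)} {m : Fin n}
    (h : ∀ k, σ ((π ^ k) m) = π ((π ^ k) m)) :
    minimalPeriod (⇑σ) m = minimalPeriod (⇑π) m := by
  have h1 : (σ ^ minimalPeriod (⇑π) m) m = m := by
    rw [agree_iterate h]; exact period_isPeriodic π m
  have h2 : (π ^ minimalPeriod (⇑σ) m) m = m := by
    rw [← agree_iterate h]; exact period_isPeriodic σ m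
  exact le_antisymm (Function.IsPeriodicPt.minimalPeriod_le (period_pos π m) h1)
    (Function.IsPeriodicPt.minimalPeriod_le (period_pos σ m) h2)

lemma agree_mins {σ π : Equiv.Perm (Fin n)} {m : Fin n}
    (h : ∀ k, σ ((π ^ k) m) = π ((π ^ k) m)) : (m ∈ mins σ ↔ m ∈ mins π) := by
  simp only [mins, Finset.mem_filter, Finset.mem_univ, true_and]
  constructor <;> intro h' k hk
  · rw [← agree_iterate h k]; exact h' k hk
  · rw [agree_iterate h k]; exact h' k hk

lemma agree_cycleList {σ π : Equiv.Perm (Fin n)} {m : Fin n}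
    (h : ∀ k, σ ((π ^ k) m) = π ((π ^ k) m)) : cycleList σ m = cycleList π m := by
  unfold cycleList
  rw [agree_period h]
  exact List.map_congr_left fun k _ => agree_iterate h k

lemma sort_eq_append_max {s : Finset (Fin n)} {a : Fin n} (ha : a ∈ s)
    (hmax : ∀ b ∈ s, b ≤ a) :
    s.sort (· ≤ ·) = (s.erase a).sort (· ≤ ·) ++ [a] := by
  apply List.Perm.eq_of_pairwise' (Finset.pairwise_sort _ _) ?_ ?_
  · rw [List.pairwise_append]
    refine ⟨Finset.pairwise_sort _ _, List.pairwise_singleton _ a, ?_⟩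
    intro x hx y hy
    rw [List.mem_singleton] at hy
    subst hy
    exact hmax x (Finset.mem_of_mem_erase ((Finset.mem_sort _).mp hx))
    
  · rw [← Multiset.coe_eq_coe]
    have h1 : ((s.sort (· ≤ ·) : List (Fin n)) : Multiset (Fin n)) = s.val :=
      Finset.sort_eq _ _
    have h2 : (((s.erase a).sort (· ≤ ·) : List (Fin n)) : Multiset (Fin n)) = (s.erase a).val :=
      Finset.sort_eq _ _
    rw [h1]
    show s.val = ↑((s.erase a).sort (· ≤ ·) ++ [a])
    rw [← Multiset.coe_add, h2, Multiset.coe_singleton, Finset.erase_val,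
      add_comm, Multiset.singleton_add, Multiset.cons_erase]
    exact ha

lemma not_inOrb_of_fixed {σ : Equiv.Perm (Fin n)} {c M : Fin n}
    (hMfix : σ M = M) (hcM : c ≠ M) : ¬ InOrb σ c M := by
  intro h
  obtain ⟨j, hj⟩ := inOrb_symm h
  rw [pow_fixed hMfix] at hj
  exact hcM hj.symm

lemma orbit_not_min {σ : Equiv.Perm (Fin n)} {c : Fin n} (hc : c ∈ mins σ) {j : ℕ}
    (hj0 : 0 < j) (hjq : j < minimalPeriod (⇑σ) c) : (σ ^ j) c ∉ mins σ := by
  intro hmem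
  have h1 : (σ ^ (minimalPeriod (⇑σ) c - j)) ((σ ^ j) c) = c := by
    rw [← Equiv.Perm.mul_apply, ← pow_add]
    have : minimalPeriod (⇑σ) c - j + j = minimalPeriod (⇑σ) c := by omega
    rw [this]
    exact period_isPeriodic σ c
  have h2 : (σ ^ j) c ≤ c := by
    have := mem_mins_iff.mp hmem (minimalPeriod (⇑σ) c - j)
    rwa [h1] at this
  exact pow_min_ne hj0 hjq (le_antisymm h2 (mem_mins_iff.mp hc j))

section Merge

variable {σ : Equiv.Perm (Fin n)} {c M : Fin n}

lemma merge_pow_eq (hMfix : σ M = M) (hcM : c ≠ M) :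
    ∀ k, k < minimalPeriod (⇑σ) c → ((Equiv.swap c M * σ) ^ k) c = (σ ^ k) c := by
  intro k
  induction k with
  | zero => intro _; rfl
  | succ k ih =>
    intro hk
    have hk' : k < minimalPeriod (⇑σ) c := by omega
    rw [pow_succ', Equiv.Perm.mul_apply, ih hk', Equiv.Perm.mul_apply]
    have h1 : σ ((σ ^ k) c) = (σ ^ (k + 1)) c := by
      rw [pow_succ', Equiv.Perm.mul_apply]
    rw [h1]
    have hne1 : (σ ^ (k + 1)) c ≠ c := pow_min_ne (Nat.succ_pos k) hk
    have hne2 : (σ ^ (k + 1)) c ≠ M := fun h => not_inOrb_of_fixed hMfix hcM ⟨k + 1, h⟩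
    exact Equiv.swap_apply_of_ne_of_ne hne1 hne2

lemma merge_pow_q (hMfix : σ M = M) (hcM : c ≠ M) :
    ((Equiv.swap c M * σ) ^ (minimalPeriod (⇑σ) c)) c = M := by
  have hq := period_pos σ c
  obtain ⟨q', hq'⟩ : ∃ q', minimalPeriod (⇑σ) c = q' + 1 := ⟨_, (Nat.succ_pred_eq_of_pos hq).symm⟩
  rw [hq', pow_succ', Equiv.Perm.mul_apply, merge_pow_eq hMfix hcM q' (by omega),
    Equiv.Perm.mul_apply]
  have h1 : σ ((σ ^ q') c) = c := by
    rw [← Equiv.Perm.mul_apply, ← pow_succ', ← hq']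
    exact period_isPeriodic σ c
  rw [h1, Equiv.swap_apply_left]

lemma merge_apply_M (hMfix : σ M = M) : (Equiv.swap c M * σ) M = c := by
  rw [Equiv.Perm.mul_apply, hMfix, Equiv.swap_apply_right]

lemma merge_period (hMfix : σ M = M) (hcM : c ≠ M) :
    minimalPeriod (⇑(Equiv.swap c M * σ)) c = minimalPeriod (⇑σ) c + 1 := by
  set q := minimalPeriod (⇑σ) c with hqdef
  have hper : ((Equiv.swap c M * σ) ^ (q + 1)) c = c := by
    rw [pow_succ', Equiv.Perm.mul_apply, merge_pow_q hMfix hcM, merge_apply_M hMfix]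
  have hle : minimalPeriod (⇑(Equiv.swap c M * σ)) c ≤ q + 1 :=
    Function.IsPeriodicPt.minimalPeriod_le (Nat.succ_pos q) hper
  set p' := minimalPeriod (⇑(Equiv.swap c M * σ)) c with hp'def
  have hp'pos : 0 < p' := period_pos _ c
  have hp'per : ((Equiv.swap c M * σ) ^ p') c = c := period_isPeriodic _ c
  rcases lt_trichotomy p' q with h | h | h
  · exfalso
    rw [merge_pow_eq hMfix hcM p' h] at hp'per
    exact pow_min_ne hp'pos h hp'per
  · exfalso
    rw [h, merge_pow_q hMfix hcM] at hp'per
    exact hcM hp'per.symm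
  · omega

lemma merge_reach (hMfix : σ M = M) (hcM : c ≠ M) (k : ℕ) :
    (∃ j, ((Equiv.swap c M * σ) ^ k) c = (σ ^ j) c) ∨ ((Equiv.swap c M * σ) ^ k) c = M := by
  induction k with
  | zero => exact Or.inl ⟨0, rfl⟩
  | succ k ih =>
    rw [pow_succ', Equiv.Perm.mul_apply]
    rcases ih with ⟨j, hj⟩ | hM'
    · rw [hj, Equiv.Perm.mul_apply]
      have h1 : σ ((σ ^ j) c) = (σ ^ (j + 1)) c := by rw [pow_succ', Equiv.Perm.mul_apply]
      rw [h1]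
      by_cases h2 : (σ ^ (j + 1)) c = c
      · right; rw [h2, Equiv.swap_apply_left]
      · have h3 : (σ ^ (j + 1)) c ≠ M := fun h => not_inOrb_of_fixed hMfix hcM ⟨j + 1, h⟩
        exact Or.inl ⟨j + 1, Equiv.swap_apply_of_ne_of_ne h2 h3⟩
    · rw [hM', merge_apply_M hMfix]
      exact Or.inl ⟨0, rfl⟩

lemma merge_agree (hMfix : σ M = M) (hcM : c ≠ M) {m : Fin n}
    (hm : ¬ InOrb σ c m) (hmM : m ≠ M) :
    ∀ k, (Equiv.swap c M * σ) ((σ ^ k) m) = σ ((σ ^ k) m) := by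
  intro k
  rw [Equiv.Perm.mul_apply]
  have h1 : σ ((σ ^ k) m) = (σ ^ (k + 1)) m := by rw [pow_succ', Equiv.Perm.mul_apply]
  rw [h1]
  have hne1 : (σ ^ (k + 1)) m ≠ c := by
    intro h
    exact hm (inOrb_symm ⟨k + 1, h⟩)
  have hne2 : (σ ^ (k + 1)) m ≠ M := by
    intro h
    obtain ⟨j, hj⟩ := inOrb_symm (⟨k + 1, h⟩ : InOrb σ m M)
    rw [pow_fixed hMfix] at hj
    exact hmM hj.symm
  exact Equiv.swap_apply_of_ne_of_ne hne1 hne2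

lemma merge_c_min (hMfix : σ M = M) (hc : c ∈ mins σ) (hcM : c ≠ M)
    (hMtop : ∀ m ∈ mins σ, m ≤ M) : c ∈ mins (Equiv.swap c M * σ) := by
  refine Finset.mem_filter.mpr ⟨Finset.mem_univ _, fun k _ => ?_⟩
  rcases merge_reach hMfix hcM k with ⟨j, hj⟩ | hj
  · rw [hj]; exact mem_mins_iff.mp hc j
  · rw [hj]; exact hMtop c hc

lemma merge_M_not_min (hn : 2 ≤ n) (hMfix : σ M = M) (hc : c ∈ mins σ) (hcM : c ≠ M)
    (hMtop : ∀ m ∈ mins σ, m ≤ M) : M ∉ mins (Equiv.swap c M * σ) := by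
  intro h
  have h1 := (Finset.mem_filter.mp h).2 1 (by omega)
  rw [pow_one, merge_apply_M hMfix] at h1
  exact absurd (le_antisymm h1 (hMtop c hc)) (Ne.symm hcM)

lemma merge_tau_per (hMfix : σ M = M) (hcM : c ≠ M) :
    ((Equiv.swap c M * σ) ^ (minimalPeriod (⇑σ) c + 1)) c = c := by
  have := period_isPeriodic (Equiv.swap c M * σ) c
  rwa [merge_period hMfix hcM] at this

lemma merge_orbit_not_min (hMfix : σ M = M) (hc : c ∈ mins σ) (hcM : c ≠ M)
    {j : ℕ} (hj0 : 0 < j) (hjq : j < minimalPeriod (⇑σ) c) :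
    (σ ^ j) c ∉ mins (Equiv.swap c M * σ) := by
  set q := minimalPeriod (⇑σ) c with hq
  have hqn : q + 1 ≤ n := by
    have := period_le (Equiv.swap c M * σ) c
    rwa [merge_period hMfix hcM] at this
  have haτ : ((Equiv.swap c M * σ) ^ j) c = (σ ^ j) c := merge_pow_eq hMfix hcM j hjq
  have hreach : ((Equiv.swap c M * σ) ^ (q + 1 - j)) ((σ ^ j) c) = c := by
    rw [← haτ, ← Equiv.Perm.mul_apply, ← pow_add]
    have : q + 1 - j + j = q + 1 := by omega
    rw [this]
    exact merge_tau_per hMfix hcM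
  intro hmem
  have h1 := (Finset.mem_filter.mp hmem).2 (q + 1 - j) (by omega)
  rw [hreach] at h1
  have h2 : c ≤ (σ ^ j) c := mem_mins_iff.mp hc j
  exact pow_min_ne hj0 hjq (le_antisymm h1 h2)

lemma merge_mins (hn : 2 ≤ n) (hMfix : σ M = M) (hM : M ∈ mins σ) (hc : c ∈ mins σ)
    (hcM : c ≠ M) (hMtop : ∀ m ∈ mins σ, m ≤ M) :
    mins (Equiv.swap c M * σ) = (mins σ).erase M := by
  ext m
  by_cases hmM : m = M
  · subst hmM
    simp only [Finset.mem_erase, ne_eq, not_true_eq_false, false_and, iff_false]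
    exact merge_M_not_min hn hMfix hc hcM hMtop
  by_cases horb : InOrb σ c m
  · obtain ⟨k, hk⟩ := horb
    have hjq : k % minimalPeriod (⇑σ) c < minimalPeriod (⇑σ) c :=
      Nat.mod_lt _ (period_pos σ c)
    have hj : (σ ^ (k % minimalPeriod (⇑σ) c)) c = m := by
      rw [pow_mod_period]; exact hk
    by_cases hj0 : k % minimalPeriod (⇑σ) c = 0
    · have hmc : m = c := by rw [← hj, hj0, pow_zero]; rfl
      subst hmc
      simp only [Finset.mem_erase]
      exact iff_of_true (merge_c_min hMfix hc hcM hMtop) ⟨hcM, hc⟩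
    · have h1 : m ∉ mins (Equiv.swap c M * σ) :=
        hj ▸ merge_orbit_not_min hMfix hc hcM (Nat.pos_of_ne_zero hj0) hjq
      have h2 : m ∉ mins σ := hj ▸ orbit_not_min hc (Nat.pos_of_ne_zero hj0) hjq
      exact iff_of_false h1 (fun h => h2 (Finset.mem_erase.mp h).2)
  · have hag := merge_agree hMfix hcM horb hmM
    rw [agree_mins hag, Finset.mem_erase]
    simp [hmM]

lemma merge_cycleList_c (hMfix : σ M = M) (hcM : c ≠ M) :
    cycleList (Equiv.swap c M * σ) c = cycleList σ c ++ [M] := by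
  unfold cycleList
  rw [merge_period hMfix hcM, List.range_succ, List.map_append]
  congr 1
  · exact List.map_congr_left fun k hk => merge_pow_eq hMfix hcM k (List.mem_range.mp hk)
  · simp [merge_pow_q hMfix hcM]

lemma cycleList_fixed {π : Equiv.Perm (Fin n)} {x : Fin n} (h : π x = x) :
    cycleList π x = [x] := by
  have hper : minimalPeriod (⇑π) x = 1 := by
    refine le_antisymm (Function.IsPeriodicPt.minimalPeriod_le one_pos ?_) (period_pos π x)
    show (π ^ 1) x = x
    rw [pow_one, h]
  unfold cycleList
  rw [hper]
  have : List.range 1 = [0] := rfl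
  rw [this]
  show [(π ^ 0) x] = [x]
  rw [pow_zero]
  rfl

lemma not_inOrb_of_min {m : Fin n} (hc : c ∈ mins σ) (hm : m ∈ mins σ) (hmc : m ≠ c) :
    ¬ InOrb σ c m := by
  intro ⟨k, hk⟩
  have hjq : k % minimalPeriod (⇑σ) c < minimalPeriod (⇑σ) c := Nat.mod_lt _ (period_pos σ c)
  have hj : (σ ^ (k % minimalPeriod (⇑σ) c)) c = m := by rw [pow_mod_period]; exact hk
  by_cases hj0 : k % minimalPeriod (⇑σ) c = 0
  · rw [hj0, pow_zero] at hj
    exact hmc (by simpa using hj.symm)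
  · exact (hj ▸ orbit_not_min hc (Nat.pos_of_ne_zero hj0) hjq) hm

lemma merge_flatten (hn : 2 ≤ n) (hMfix : σ M = M) (hM : M ∈ mins σ) (hc : c ∈ mins σ)
    (hcM : c ≠ M) (hMtop : ∀ m ∈ mins σ, m ≤ M) (hctop : ∀ m ∈ mins σ, m ≠ M → m ≤ c) :
    flattenPerm (Equiv.swap c M * σ) = flattenPerm σ := by
  have e1 : cycleMins σ = ((mins σ).erase M).sort (· ≤ ·) ++ [M] :=
    sort_eq_append_max hM hMtop
  have hcmem : c ∈ (mins σ).erase M := Finset.mem_erase.mpr ⟨hcM, hc⟩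
  have hcmax : ∀ b ∈ (mins σ).erase M, b ≤ c := fun b hb =>
    hctop b (Finset.mem_erase.mp hb).2 (Finset.mem_erase.mp hb).1
  have e2 : ((mins σ).erase M).sort (· ≤ ·)
      = (((mins σ).erase M).erase c).sort (· ≤ ·) ++ [c] :=
    sort_eq_append_max hcmem hcmax
  have e3 : cycleMins (Equiv.swap c M * σ)
      = (((mins σ).erase M).erase c).sort (· ≤ ·) ++ [c] := by
    rw [cycleMins_eq, merge_mins hn hMfix hM hc hcM hMtop]
    exact e2
  set L := (((mins σ).erase M).erase c).sort (· ≤ ·) with hL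
  have hLmap : L.map (cycleList (Equiv.swap c M * σ)) = L.map (cycleList σ) := by
    refine List.map_congr_left fun m hm => ?_
    have hm1 : m ∈ ((mins σ).erase M).erase c := (Finset.mem_sort _).mp hm
    have hmc : m ≠ c := (Finset.mem_erase.mp hm1).1
    have hmM : m ≠ M := (Finset.mem_erase.mp (Finset.mem_erase.mp hm1).2).1
    have hmS : m ∈ mins σ := (Finset.mem_erase.mp (Finset.mem_erase.mp hm1).2).2
    exact agree_cycleList (merge_agree hMfix hcM (not_inOrb_of_min hc hmS hmc) hmM)
  unfold flattenPerm
  rw [e3, e1, e2]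
  simp only [List.map_append, List.flatten_append, hLmap, List.map_cons, List.map_nil,
    List.flatten_cons, List.flatten_nil, List.append_nil, merge_cycleList_c hMfix hcM,
    cycleList_fixed hMfix, List.append_assoc]

end Merge

section Split

variable {π : Equiv.Perm (Fin n)} {b x : Fin n}

lemma split_p2 (hxb : π x = b) (hxbne : x ≠ b) : 2 ≤ minimalPeriod (⇑π) b := by
  have hp := period_pos π b
  rcases Nat.lt_or_ge (minimalPeriod (⇑π) b) 2 with h | h
  · exfalso
    have h1 : minimalPeriod (⇑π) b = 1 := by omega
    have h2 : (π ^ 1) b = b := by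
      have := period_isPeriodic π b
      rwa [h1] at this
    rw [pow_one] at h2
    exact hxbne (π.injective (by rw [hxb, h2]))
  · exact h

lemma split_x_eq (hxb : π x = b) (hxbne : x ≠ b) :
    (π ^ (minimalPeriod (⇑π) b - 1)) b = x := by
  apply π.injective
  rw [hxb]
  have h1 : π ((π ^ (minimalPeriod (⇑π) b - 1)) b) = (π ^ minimalPeriod (⇑π) b) b := by
    rw [← Equiv.Perm.mul_apply, ← pow_succ']
    congr 2
    have := split_p2 hxb hxbne
    omega
  rw [h1]
  exact period_isPeriodic π b

lemma split_fix (hxb : π x = b) : (Equiv.swap b x * π) x = x := by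
  rw [Equiv.Perm.mul_apply, hxb, Equiv.swap_apply_left]

lemma split_pow_eq (hxb : π x = b) (hxbne : x ≠ b) :
    ∀ k, k < minimalPeriod (⇑π) b - 1 → ((Equiv.swap b x * π) ^ k) b = (π ^ k) b := by
  intro k
  induction k with
  | zero => intro _; rfl
  | succ k ih =>
    intro hk
    have hp2 := split_p2 hxb hxbne
    rw [pow_succ', Equiv.Perm.mul_apply, ih (by omega), Equiv.Perm.mul_apply]
    have h1 : π ((π ^ k) b) = (π ^ (k + 1)) b := by rw [pow_succ', Equiv.Perm.mul_apply]
    rw [h1]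
    have hne1 : (π ^ (k + 1)) b ≠ b := pow_min_ne (Nat.succ_pos k) (by omega)
    have hne2 : (π ^ (k + 1)) b ≠ x := by
      intro h
      have h2 : (π ^ (k + 2)) b = b := by
        rw [pow_succ', Equiv.Perm.mul_apply, h, hxb]
      have := Function.IsPeriodicPt.minimalPeriod_le (by omega : 0 < k + 2) h2
      omega
    exact Equiv.swap_apply_of_ne_of_ne hne1 hne2

lemma split_pow_back (hxb : π x = b) (hxbne : x ≠ b) :
    ((Equiv.swap b x * π) ^ (minimalPeriod (⇑π) b - 1)) b = b := by
  have hp2 := split_p2 hxb hxbne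
  have h1 : minimalPeriod (⇑π) b - 1 = (minimalPeriod (⇑π) b - 2) + 1 := by omega
  rw [h1, pow_succ', Equiv.Perm.mul_apply,
    split_pow_eq hxb hxbne _ (by omega), Equiv.Perm.mul_apply]
  have h2 : π ((π ^ (minimalPeriod (⇑π) b - 2)) b) = x := by
    rw [← Equiv.Perm.mul_apply, ← pow_succ']
    have h3 : minimalPeriod (⇑π) b - 2 + 1 = minimalPeriod (⇑π) b - 1 := by omega
    rw [h3]
    exact split_x_eq hxb hxbne
  rw [h2, Equiv.swap_apply_right]

lemma split_b_min (hxb : π x = b) (hxbne : x ≠ b) (hb : b ∈ mins π) :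
    b ∈ mins (Equiv.swap b x * π) := by
  have hp2 := split_p2 hxb hxbne
  have hper : minimalPeriod (⇑(Equiv.swap b x * π)) b ≤ minimalPeriod (⇑π) b - 1 :=
    Function.IsPeriodicPt.minimalPeriod_le (by omega) (split_pow_back hxb hxbne)
  refine Finset.mem_filter.mpr ⟨Finset.mem_univ _, fun k _ => ?_⟩
  rw [← pow_mod_period]
  have hlt : k % minimalPeriod (⇑(Equiv.swap b x * π)) b < minimalPeriod (⇑π) b - 1 :=
    lt_of_lt_of_le (Nat.mod_lt _ (period_pos _ b)) hper
  rw [split_pow_eq hxb hxbne _ hlt]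
  exact mem_mins_iff.mp hb _

lemma split_x_min (hxb : π x = b) : x ∈ mins (Equiv.swap b x * π) := by
  refine Finset.mem_filter.mpr ⟨Finset.mem_univ _, fun k _ => ?_⟩
  rw [pow_fixed (split_fix hxb)]

lemma split_b_lt_x (hxb : π x = b) (hxbne : x ≠ b) (hb : b ∈ mins π) : b < x := by
  have h1 : b ≤ x := by
    have := mem_mins_iff.mp hb (minimalPeriod (⇑π) b - 1)
    rwa [split_x_eq hxb hxbne] at this
  exact lt_of_le_of_ne h1 (Ne.symm hxbne)

lemma split_x_not_min (hn : 2 ≤ n) (hxb : π x = b) (hxbne : x ≠ b) (hb : b ∈ mins π) :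
    x ∉ mins π := by
  intro h
  have h1 := (Finset.mem_filter.mp h).2 1 (by omega)
  rw [pow_one, hxb] at h1
  exact absurd (split_b_lt_x hxb hxbne hb) (not_lt.mpr h1)

lemma split_orbit_not_min (hxb : π x = b) (hxbne : x ≠ b) (hb : b ∈ mins π)
    {j : ℕ} (hj0 : 0 < j) (hj : j < minimalPeriod (⇑π) b - 1) :
    (π ^ j) b ∉ mins (Equiv.swap b x * π) := by
  have hp2 := split_p2 hxb hxbne
  have hpn := period_le π b
  have h1 : ((Equiv.swap b x * π) ^ (minimalPeriod (⇑π) b - 1 - j)) ((π ^ j) b) = b := by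
    rw [← split_pow_eq hxb hxbne j hj, ← Equiv.Perm.mul_apply, ← pow_add]
    have : minimalPeriod (⇑π) b - 1 - j + j = minimalPeriod (⇑π) b - 1 := by omega
    rw [this]
    exact split_pow_back hxb hxbne
  intro hmem
  have h2 := (Finset.mem_filter.mp hmem).2 (minimalPeriod (⇑π) b - 1 - j) (by omega)
  rw [h1] at h2
  have h3 : b ≤ (π ^ j) b := mem_mins_iff.mp hb j
  exact pow_min_ne hj0 (by omega) (le_antisymm h2 h3)

lemma split_agree (hxb : π x = b) (hxbne : x ≠ b) {m : Fin n}
    (hm : ¬ InOrb π b m) :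
    ∀ k, (Equiv.swap b x * π) ((π ^ k) m) = π ((π ^ k) m) := by
  intro k
  rw [Equiv.Perm.mul_apply]
  have h1 : π ((π ^ k) m) = (π ^ (k + 1)) m := by rw [pow_succ', Equiv.Perm.mul_apply]
  rw [h1]
  have hne1 : (π ^ (k + 1)) m ≠ b := fun h => hm (inOrb_symm ⟨k + 1, h⟩)
  have hne2 : (π ^ (k + 1)) m ≠ x := by
    intro h
    have hbx : InOrb π b x := ⟨minimalPeriod (⇑π) b - 1, split_x_eq hxb hxbne⟩
    exact hm (inOrb_trans hbx (inOrb_symm ⟨k + 1, h⟩))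
  exact Equiv.swap_apply_of_ne_of_ne hne1 hne2

lemma split_mins (hn : 2 ≤ n) (hxb : π x = b) (hxbne : x ≠ b) (hb : b ∈ mins π) :
    mins (Equiv.swap b x * π) = insert x (mins π) := by
  have hp2 := split_p2 hxb hxbne
  ext m
  by_cases hmx : m = x
  · subst hmx
    exact iff_of_true (split_x_min hxb) (Finset.mem_insert_self _ _)
  by_cases hmb : m = b
  · subst hmb
    exact iff_of_true (split_b_min hxb hxbne hb)
      (Finset.mem_insert.mpr (Or.inr hb))
  by_cases horb : InOrb π b m
  · obtain ⟨k, hk⟩ := horb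
    have hjq : k % minimalPeriod (⇑π) b < minimalPeriod (⇑π) b := Nat.mod_lt _ (period_pos π b)
    have hj : (π ^ (k % minimalPeriod (⇑π) b)) b = m := by rw [pow_mod_period]; exact hk
    have hj0 : k % minimalPeriod (⇑π) b ≠ 0 := by
      intro h
      rw [h, pow_zero] at hj
      exact hmb (by simpa using hj.symm)
    have hjtop : k % minimalPeriod (⇑π) b ≠ minimalPeriod (⇑π) b - 1 := by
      intro h
      rw [h, split_x_eq hxb hxbne] at hj
      exact hmx hj.symm
    have hjlt : k % minimalPeriod (⇑π) b < minimalPeriod (⇑π) b - 1 := by omega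
    have h1 : m ∉ mins (Equiv.swap b x * π) :=
      hj ▸ split_orbit_not_min hxb hxbne hb (Nat.pos_of_ne_zero hj0) hjlt
    have h2 : m ∉ mins π := hj ▸ orbit_not_min hb (Nat.pos_of_ne_zero hj0) hjq
    refine iff_of_false h1 (fun h => ?_)
    rcases Finset.mem_insert.mp h with h | h
    · exact hmx h
    · exact h2 h
  · rw [agree_mins (split_agree hxb hxbne horb), Finset.mem_insert]
    simp [hmx]

end Split

lemma zero_mem_mins (hn0 : 0 < n) (π : Equiv.Perm (Fin n)) : (⟨0, hn0⟩ : Fin n) ∈ mins π :=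
  Finset.mem_filter.mpr ⟨Finset.mem_univ _, fun k _ => by
    rw [Fin.le_def]; exact Nat.zero_le _⟩

noncomputable def Mtop (hn0 : 0 < n) (π : Equiv.Perm (Fin n)) : Fin n :=
  (mins π).max' ⟨_, zero_mem_mins hn0 π⟩

lemma Mtop_mem (hn0 : 0 < n) (π : Equiv.Perm (Fin n)) : Mtop hn0 π ∈ mins π :=
  Finset.max'_mem _ _

lemma Mtop_top (hn0 : 0 < n) (π : Equiv.Perm (Fin n)) : ∀ m ∈ mins π, m ≤ Mtop hn0 π :=
  fun _ hm => Finset.le_max' _ _ hm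

lemma Mtop_unique (hn0 : 0 < n) {π : Equiv.Perm (Fin n)} {a : Fin n} (ha : a ∈ mins π)
    (htop : ∀ m ∈ mins π, m ≤ a) : Mtop hn0 π = a :=
  le_antisymm (Finset.max'_le _ _ _ htop) (Finset.le_max' _ _ ha)

lemma exists_min_inOrb (π : Equiv.Perm (Fin n)) (y : Fin n) :
    ∃ m ∈ mins π, InOrb π m y := by
  set p := minimalPeriod (⇑π) y with hp
  set O := (Finset.range p).image (fun k => (π ^ k) y) with hO
  have hOne : O.Nonempty := ⟨y, Finset.mem_image.mpr ⟨0, Finset.mem_range.mpr (period_pos π y), rfl⟩⟩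
  obtain ⟨k, hkp, hk⟩ := Finset.mem_image.mp (O.min'_mem hOne)
  refine ⟨O.min' hOne, ?_, inOrb_symm ⟨k, hk⟩⟩
  refine mem_mins_iff.mpr fun j => ?_
  have h1 : (π ^ j) (O.min' hOne) = (π ^ ((j + k) % p)) y := by
    rw [← hk, ← Equiv.Perm.mul_apply, ← pow_add, pow_mod_period]
  rw [h1]
  exact Finset.min'_le _ _ (Finset.mem_image.mpr
    ⟨(j + k) % p, Finset.mem_range.mpr (Nat.mod_lt _ (period_pos π y)), rfl⟩)

lemma second_exists (hn : 2 ≤ n) {σ : Equiv.Perm (Fin n)}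
    (hfix : σ (Mtop (by omega) σ) = Mtop (by omega : 0 < n) σ) :
    ((mins σ).erase (Mtop (by omega : 0 < n) σ)).Nonempty := by
  have hn0 : 0 < n := by omega
  by_cases h : (⟨0, hn0⟩ : Fin n) = Mtop hn0 σ
  · exfalso
    obtain ⟨m, hm, horb⟩ := exists_min_inOrb σ ⟨1, by omega⟩
    have hm1 : m ≤ Mtop hn0 σ := Mtop_top hn0 σ m hm
    have hm2 : Mtop hn0 σ ≤ m := h ▸ (by rw [Fin.le_def]; exact Nat.zero_le _)
    have hmM : m = Mtop hn0 σ := le_antisymm hm1 hm2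
    obtain ⟨k, hk⟩ := horb
    rw [hmM, pow_fixed hfix] at hk
    rw [← h] at hk
    exact absurd (congrArg Fin.val hk) (by simp)
  · exact ⟨_, Finset.mem_erase.mpr ⟨h, zero_mem_mins hn0 σ⟩⟩

/-- The split map: detach the last element of the cycle carrying the largest cycle-minimum. -/
noncomputable def splitMap (hn0 : 0 < n) (π : Equiv.Perm (Fin n)) : Equiv.Perm (Fin n) :=
  Equiv.swap (Mtop hn0 π) (π⁻¹ (Mtop hn0 π)) * π

lemma merge_all (hn : 2 ≤ n) {σ : Equiv.Perm (Fin n)}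
    (hfix : σ (Mtop (by omega : 0 < n) σ) = Mtop (by omega : 0 < n) σ)
    (h2 : ((mins σ).erase (Mtop (by omega : 0 < n) σ)).Nonempty) :
    flattenPerm (Equiv.swap (((mins σ).erase (Mtop (by omega : 0 < n) σ)).max' h2)
        (Mtop (by omega : 0 < n) σ) * σ) = flattenPerm σ ∧
    (Equiv.swap (((mins σ).erase (Mtop (by omega : 0 < n) σ)).max' h2)
        (Mtop (by omega : 0 < n) σ) * σ)
      (Mtop (by omega : 0 < n)
        (Equiv.swap (((mins σ).erase (Mtop (by omega : 0 < n) σ)).max' h2)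
          (Mtop (by omega : 0 < n) σ) * σ)) ≠
      Mtop (by omega : 0 < n)
        (Equiv.swap (((mins σ).erase (Mtop (by omega : 0 < n) σ)).max' h2)
          (Mtop (by omega : 0 < n) σ) * σ) ∧
    splitMap (by omega : 0 < n)
      (Equiv.swap (((mins σ).erase (Mtop (by omega : 0 < n) σ)).max' h2)
        (Mtop (by omega : 0 < n) σ) * σ) = σ := by
  have hn0 : 0 < n := by omega
  set M := Mtop hn0 σ with hMdef
  set c := ((mins σ).erase M).max' h2 with hcdef
  have hM : M ∈ mins σ := Mtop_mem hn0 σ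
  have hMtop : ∀ m ∈ mins σ, m ≤ M := Mtop_top hn0 σ
  have hcmem : c ∈ (mins σ).erase M := Finset.max'_mem _ _
  have hc : c ∈ mins σ := Finset.mem_of_mem_erase hcmem
  have hcM : c ≠ M := (Finset.mem_erase.mp hcmem).1
  have hctop : ∀ m ∈ mins σ, m ≠ M → m ≤ c := fun m hm hne =>
    Finset.le_max' _ _ (Finset.mem_erase.mpr ⟨hne, hm⟩)
  set τ := Equiv.swap c M * σ with hτdef
  have hminsτ : mins τ = (mins σ).erase M := merge_mins hn hfix hM hc hcM hMtop
  have hMtopτ : Mtop hn0 τ = c := by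
    refine Mtop_unique hn0 ?_ ?_
    · exact merge_c_min hfix hc hcM hMtop
    · intro m hm
      rw [hminsτ] at hm
      exact hctop m (Finset.mem_of_mem_erase hm) (Finset.mem_erase.mp hm).1
  have hmove : τ c ≠ c := by
    by_cases hsc : σ c = c
    · rw [hτdef, Equiv.Perm.mul_apply, hsc, Equiv.swap_apply_left]
      exact Ne.symm hcM
    · have hscM : σ c ≠ M := fun h => hcM (σ.injective (by rw [h, hfix]))
      rw [hτdef, Equiv.Perm.mul_apply, Equiv.swap_apply_of_ne_of_ne hsc hscM]
      exact hsc
  have hτM : τ M = c := merge_apply_M hfix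
  refine ⟨merge_flatten hn hfix hM hc hcM hMtop hctop, ?_, ?_⟩
  · rw [hMtopτ]; exact hmove
  · rw [splitMap, hMtopτ]
    have hτinv : τ⁻¹ c = M := by rw [← hτM]; exact τ.symm_apply_apply M
    rw [hτinv, hτdef, ← mul_assoc, Equiv.swap_mul_self, one_mul]

lemma split_all (hn : 2 ≤ n) {π : Equiv.Perm (Fin n)}
    (hmove : π (Mtop (by omega : 0 < n) π) ≠ Mtop (by omega : 0 < n) π) :
    flattenPerm (splitMap (by omega : 0 < n) π) = flattenPerm π ∧
    (splitMap (by omega : 0 < n) π)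
        (Mtop (by omega : 0 < n) (splitMap (by omega : 0 < n) π)) =
      Mtop (by omega : 0 < n) (splitMap (by omega : 0 < n) π) ∧
    ∀ h2 : ((mins (splitMap (by omega : 0 < n) π)).erase
        (Mtop (by omega : 0 < n) (splitMap (by omega : 0 < n) π))).Nonempty,
      Equiv.swap (((mins (splitMap (by omega : 0 < n) π)).erase
          (Mtop (by omega : 0 < n) (splitMap (by omega : 0 < n) π))).max' h2)
        (Mtop (by omega : 0 < n) (splitMap (by omega : 0 < n) π)) *
        splitMap (by omega : 0 < n) π = π := by
  have hn0 : 0 < n := by omega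
  set b := Mtop hn0 π with hbdef
  set x := π⁻¹ b with hxdef
  have hxb : π x = b := π.apply_symm_apply b
  have hxbne : x ≠ b := by
    intro h
    rw [h] at hxb
    exact hmove hxb
  have hb : b ∈ mins π := Mtop_mem hn0 π
  have hbtop : ∀ m ∈ mins π, m ≤ b := Mtop_top hn0 π
  have hσdef : splitMap hn0 π = Equiv.swap b x * π := rfl
  set σ := Equiv.swap b x * π with hσ
  have hmins : mins σ = insert x (mins π) := split_mins hn hxb hxbne hb
  have hxtop : ∀ m ∈ mins σ, m ≤ x := by
    intro m hm
    rw [hmins] at hm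
    rcases Finset.mem_insert.mp hm with h | h
    · exact h.le
    · exact le_of_lt (lt_of_le_of_lt (hbtop m h) (split_b_lt_x hxb hxbne hb))
  have hMtopσ : Mtop hn0 σ = x := Mtop_unique hn0 (split_x_min hxb) hxtop
  have hfixσ : σ x = x := split_fix hxb
  have hbc : ∀ h2 : ((mins σ).erase x).Nonempty, ((mins σ).erase x).max' h2 = b := by
    intro h2
    refine le_antisymm (Finset.max'_le _ _ _ fun y hy => ?_) (Finset.le_max' _ _ ?_)
    · have hy1 : y ∈ mins σ := Finset.mem_of_mem_erase hy
      have hy2 : y ≠ x := (Finset.mem_erase.mp hy).1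
      rw [hmins] at hy1
      rcases Finset.mem_insert.mp hy1 with h | h
      · exact absurd h hy2
      · exact hbtop y h
    · refine Finset.mem_erase.mpr ⟨Ne.symm hxbne, ?_⟩
      exact split_b_min hxb hxbne hb
  constructor
  · rw [hσdef]
    have hres := merge_flatten (σ := σ) (c := b) (M := x) hn hfixσ (split_x_min hxb)
      (split_b_min hxb hxbne hb) (Ne.symm hxbne) hxtop ?_
    · have hback : Equiv.swap b x * σ = π := by
        rw [hσ, ← mul_assoc, Equiv.swap_mul_self, one_mul]
      rw [hback] at hres
      exact hres.symm
    · intro m hm hmx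
      rw [hmins] at hm
      rcases Finset.mem_insert.mp hm with h | h
      · exact absurd h hmx
      · exact hbtop m h
  constructor
  · rw [hσdef] at *
    rw [hMtopσ]
    exact hfixσ
  · rw [hσdef] at *
    rw [hMtopσ]
    intro h2
    rw [hbc h2, hσ, ← mul_assoc, Equiv.swap_mul_self, one_mul]

end FlatAux

/-- For every `n ≥ 2`, every coefficient of `g_n ∈ ℤ[q]` is even. -/
theorem gPoly_coeff_even (n : ℕ) (hn : 2 ≤ n) (m : ℕ) :
    Even ((gPoly n).coeff m) := by
  classical
  have hn0 : 0 < n := by omega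
  have hcoeff : (gPoly n).coeff m
      = ((Finset.univ.filter
          (fun π : Equiv.Perm (Fin n) => m = occ (flattenPerm π))).card : ℤ) := by
    unfold gPoly
    rw [Polynomial.finset_sum_coeff]
    simp only [Polynomial.coeff_X_pow]
    rw [Finset.sum_boole]
  rw [hcoeff, Int.even_coe_nat]
  set S := Finset.univ.filter (fun π : Equiv.Perm (Fin n) => m = occ (flattenPerm π)) with hS
  have hsplit := Finset.card_filter_add_card_filter_not
    (s := S) (p := fun π => π (FlatAux.Mtop hn0 π) = FlatAux.Mtop hn0 π)
  have hbij : (S.filter (fun π => π (FlatAux.Mtop hn0 π) = FlatAux.Mtop hn0 π)).card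
      = (S.filter (fun π => ¬ π (FlatAux.Mtop hn0 π) = FlatAux.Mtop hn0 π)).card := by
    refine Finset.card_bij'
      (fun σ hσ => Equiv.swap (((FlatAux.mins σ).erase (FlatAux.Mtop hn0 σ)).max'
          (FlatAux.second_exists hn (Finset.mem_filter.mp hσ).2)) (FlatAux.Mtop hn0 σ) * σ)
      (fun π _ => FlatAux.splitMap hn0 π) ?_ ?_ ?_ ?_
    · intro σ hσ
      have hσP : σ (FlatAux.Mtop hn0 σ) = FlatAux.Mtop hn0 σ := (Finset.mem_filter.mp hσ).2
      have hocc : m = occ (flattenPerm σ) :=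
        (Finset.mem_filter.mp ((Finset.mem_filter.mp hσ).1)).2
      obtain ⟨hfl, hne, _⟩ := FlatAux.merge_all hn hσP (FlatAux.second_exists hn hσP)
      refine Finset.mem_filter.mpr ⟨Finset.mem_filter.mpr ⟨Finset.mem_univ _, ?_⟩, ?_⟩
      · rw [hfl]; exact hocc
      · exact hne
    · intro π hπ
      have hπP : ¬ π (FlatAux.Mtop hn0 π) = FlatAux.Mtop hn0 π := (Finset.mem_filter.mp hπ).2
      have hocc : m = occ (flattenPerm π) :=
        (Finset.mem_filter.mp ((Finset.mem_filter.mp hπ).1)).2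
      obtain ⟨hfl, hfix, _⟩ := FlatAux.split_all hn hπP
      refine Finset.mem_filter.mpr ⟨Finset.mem_filter.mpr ⟨Finset.mem_univ _, ?_⟩, ?_⟩
      · rw [hfl]; exact hocc
      · exact hfix
    · intro σ hσ
      have hσP : σ (FlatAux.Mtop hn0 σ) = FlatAux.Mtop hn0 σ := (Finset.mem_filter.mp hσ).2
      obtain ⟨_, _, hsp⟩ := FlatAux.merge_all hn hσP (FlatAux.second_exists hn hσP)
      exact hsp
    · intro π hπ
      have hπP : ¬ π (FlatAux.Mtop hn0 π) = FlatAux.Mtop hn0 π := (Finset.mem_filter.mp hπ).2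
      obtain ⟨_, _, hinv⟩ := FlatAux.split_all hn hπP
      exact hinv _
  exact ⟨(S.filter (fun π => ¬ π (FlatAux.Mtop hn0 π) = FlatAux.Mtop hn0 π)).card,
    by omega⟩
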